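/- Consider augmented gradient descent W_{t+1} = W_t − (2η_t/N)(W_t X_t − Y_t)X_tᵀ with (X_t, Y_t) independent of W_t, and let W_t* := E[Y_t X_tᵀ] E[X_t X_tᵀ]⁺. Then the means obey the recursion E[W_{t+1}] − W_{t+1}* = (E[W_t] − W_t*)(Id − (2η_t/N) E[X_t X_tᵀ]) − (W_{t+1}* − W_t*). -/

import Mathlib

open MeasureTheory ProbabilityTheory Matrix

/-- Entrywise expectation of a random matrix. -/
noncomputable def mExp {Ω : Type*} [MeasureSpace Ω] {m n : ℕ}
    (M : Ω → Matrix (Fin m) (Fin n) ℝ) : Matrix (Fin m) (Fin n) ℝ :=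
  Matrix.of fun i j => ∫ ω, M ω i j

/-- `P` is the Moore–Penrose pseudoinverse of `A`: the four Penrose equations. -/
def IsMoorePenrose {n : ℕ} (A P : Matrix (Fin n) (Fin n) ℝ) : Prop :=
  A * P * A = A ∧ P * A * P = P ∧ (A * P)ᵀ = A * P ∧ (P * A)ᵀ = P * A

instance matMeas {m n : ℕ} : MeasurableSpace (Matrix (Fin m) (Fin n) ℝ) :=
  MeasurableSpace.pi

/-- The mean recursion for augmented gradient descent:
`E[W_{t+1}] − W_{t+1}* = (E[W_t] − W_t*)(Id − (2η_t/N) E[X_t X_tᵀ]) − (W_{t+1}* − W_t*)`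
where `W_t* = E[Y_t X_tᵀ] E[X_t X_tᵀ]⁺`. -/
theorem stmt_12 {Ω : Type*} [MeasureSpace Ω] [IsProbabilityMeasure (volume : Measure Ω)]
    {n p : ℕ} (N : ℕ) (hN : 1 ≤ N) (Nd : ℕ → ℕ) (η : ℕ → ℝ) (hη : ∀ t, 0 < η t)
    (W : ℕ → Ω → Matrix (Fin p) (Fin n) ℝ)
    (X : (t : ℕ) → Ω → Matrix (Fin n) (Fin (Nd t)) ℝ)
    (Y : (t : ℕ) → Ω → Matrix (Fin p) (Fin (Nd t)) ℝ)
    -- the dynamics of augmented gradient descent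
    (hdyn : ∀ t ω, W (t + 1) ω =
      W t ω - ((2 * η t) / (N : ℝ)) • ((W t ω * X t ω - Y t ω) * (X t ω)ᵀ))
    -- `(X_t, Y_t)` is independent of `W_t`
    (hindep : ∀ t, IndepFun (W t) (fun ω => (X t ω, Y t ω)) volume)
    -- the kernel of `E[X_t X_tᵀ]` is a.s. contained in the kernel of `X_tᵀ`
    (hker : ∀ t (u : Fin n → ℝ),
      (mExp (fun ω => X t ω * (X t ω)ᵀ)).mulVec u = 0 →
        ∀ᵐ ω, (X t ω)ᵀ.mulVec u = 0)
    -- integrability of all relevant entries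
    (hintW : ∀ t i j, Integrable (fun ω => W t ω i j))
    (hintXX : ∀ t i j, Integrable (fun ω => (X t ω * (X t ω)ᵀ) i j))
    (hintYX : ∀ t i j, Integrable (fun ω => (Y t ω * (X t ω)ᵀ) i j))
    (hintWXX : ∀ t i j, Integrable (fun ω => (W t ω * X t ω * (X t ω)ᵀ) i j))
    -- the Moore–Penrose pseudoinverses and proxy optima
    (Pm : ℕ → Matrix (Fin n) (Fin n) ℝ)
    (hPm : ∀ t, IsMoorePenrose (mExp (fun ω => X t ω * (X t ω)ᵀ)) (Pm t))
    (Wstar : ℕ → Matrix (Fin p) (Fin n) ℝ)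
    (hWstar : ∀ t, Wstar t = mExp (fun ω => Y t ω * (X t ω)ᵀ) * Pm t) :
    ∀ t, mExp (W (t + 1)) - Wstar (t + 1) =
      (mExp (W t) - Wstar t) *
          (1 - ((2 * η t) / (N : ℝ)) • mExp (fun ω => X t ω * (X t ω)ᵀ))
        - (Wstar (t + 1) - Wstar t) := by
  intro t
  have meval : ∀ {m k : ℕ} (a : Fin m) (b : Fin k),
      Measurable (fun M : Matrix (Fin m) (Fin k) ℝ => M a b) :=
    fun a b => (measurable_pi_apply b).comp (measurable_pi_apply a)
  set c : ℝ := (2 * η t) / (N : ℝ) with hc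
  -- Step 1: independence factorization E[W X Xᵀ] = E[W] E[X Xᵀ]
  have hWA : mExp (fun ω => W t ω * X t ω * (X t ω)ᵀ)
      = mExp (W t) * mExp (fun ω => X t ω * (X t ω)ᵀ) := by
    ext i j
    have hind : ∀ k : Fin n, IndepFun (fun ω => W t ω i k)
        (fun ω => (X t ω * (X t ω)ᵀ) k j) volume := by
      intro k
      have hψ : Measurable (fun q : Matrix (Fin n) (Fin (Nd t)) ℝ ×
          Matrix (Fin p) (Fin (Nd t)) ℝ => (q.1 * q.1ᵀ) k j) := by
        simp only [Matrix.mul_apply, Matrix.transpose_apply]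
        exact Finset.measurable_sum _ fun r _ =>
          ((meval k r).comp measurable_fst).mul ((meval j r).comp measurable_fst)
      exact (hindep t).comp (meval i k) hψ
    calc mExp (fun ω => W t ω * X t ω * (X t ω)ᵀ) i j
        = ∫ ω, ∑ k, W t ω i k * (X t ω * (X t ω)ᵀ) k j := by
          refine integral_congr_ae (Filter.EventuallyEq.of_eq ?_)
          funext ω
          show (W t ω * X t ω * (X t ω)ᵀ) i j = _
          rw [Matrix.mul_assoc, Matrix.mul_apply]
      _ = ∑ k, ∫ ω, W t ω i k * (X t ω * (X t ω)ᵀ) k j :=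
          integral_finset_sum _ fun k _ =>
            (hind k).integrable_mul (hintW t i k) (hintXX t k j)
      _ = ∑ k, (∫ ω, W t ω i k) * (∫ ω, (X t ω * (X t ω)ᵀ) k j) :=
          Finset.sum_congr rfl fun k _ =>
            (hind k).integral_fun_mul_eq_mul_integral (hintW t i k).aestronglyMeasurable
              (hintXX t k j).aestronglyMeasurable
      _ = (mExp (W t) * mExp (fun ω => X t ω * (X t ω)ᵀ)) i j := by
          simp [Matrix.mul_apply, mExp]
  -- Step 2: the mean dynamics
  have hstep : mExp (W (t + 1)) = mExp (W t)
      - c • (mExp (W t) * mExp (fun ω => X t ω * (X t ω)ᵀ)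
          - mExp (fun ω => Y t ω * (X t ω)ᵀ)) := by
    ext i j
    have hptw : ∀ ω, W (t + 1) ω i j = W t ω i j
        - c * ((W t ω * X t ω * (X t ω)ᵀ) i j - (Y t ω * (X t ω)ᵀ) i j) := by
      intro ω
      rw [hdyn t ω, Matrix.sub_mul]
      simp [Matrix.sub_apply, Matrix.smul_apply, smul_eq_mul, ← hc]
    calc mExp (W (t + 1)) i j
        = ∫ ω, (W t ω i j
            - c * ((W t ω * X t ω * (X t ω)ᵀ) i j - (Y t ω * (X t ω)ᵀ) i j)) :=
          integral_congr_ae (Filter.EventuallyEq.of_eq (funext hptw))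
      _ = (∫ ω, W t ω i j)
            - c * ((∫ ω, (W t ω * X t ω * (X t ω)ᵀ) i j)
              - ∫ ω, (Y t ω * (X t ω)ᵀ) i j) := by
          have hI2 : Integrable (fun ω =>
              c * ((W t ω * X t ω * (X t ω)ᵀ) i j - (Y t ω * (X t ω)ᵀ) i j)) volume :=
            ((hintWXX t i j).sub (hintYX t i j)).const_mul c
          rw [integral_sub (hintW t i j) hI2, integral_const_mul,
            integral_sub (hintWXX t i j) (hintYX t i j)]
      _ = _ := by
          have := congrFun (congrFun hWA i) j
          simp only [mExp, Matrix.of_apply] at this ⊢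
          rw [this]
          simp [Matrix.sub_apply, Matrix.smul_apply, smul_eq_mul]
  -- Step 3: Wstar t * E[X Xᵀ] = E[Y Xᵀ]
  have hSA : mExp (fun ω => Y t ω * (X t ω)ᵀ) * Pm t
        * mExp (fun ω => X t ω * (X t ω)ᵀ)
      = mExp (fun ω => Y t ω * (X t ω)ᵀ) := by
    set A := mExp (fun ω => X t ω * (X t ω)ᵀ) with hA
    have hA0 : A * (1 - Pm t * A) = 0 := by
      rw [mul_sub, mul_one, ← Matrix.mul_assoc, (hPm t).1, sub_self]
    ext i j
    rw [Matrix.mul_assoc]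
    have hu : A.mulVec (fun k => (1 - Pm t * A) k j) = 0 := by
      funext r
      have : (A * (1 - Pm t * A)) r j = 0 := by rw [hA0]; rfl
      simpa [Matrix.mulVec, Matrix.mul_apply, dotProduct] using this
    have hae := hker t _ (by rw [← hA]; exact hu)
    have key : ∀ᵐ ω, ∑ k, (Y t ω * (X t ω)ᵀ) i k * (Pm t * A) k j
        = (Y t ω * (X t ω)ᵀ) i j := by
      filter_upwards [hae] with ω hω
      have hcol : ∀ r, ∑ k, (X t ω)ᵀ r k * (Pm t * A) k j = (X t ω)ᵀ r j := by
        intro r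
        have h1 : ∑ k, (X t ω)ᵀ r k * ((1 : Matrix (Fin n) (Fin n) ℝ) k j
            - (Pm t * A) k j) = 0 := by
          simpa [Matrix.mulVec, dotProduct, Matrix.sub_apply] using congrFun hω r
        have h2 : ∑ k, (X t ω)ᵀ r k * (1 : Matrix (Fin n) (Fin n) ℝ) k j
            = (X t ω)ᵀ r j := by
          simp [Matrix.one_apply]
        rw [Finset.sum_congr rfl (fun k _ => mul_sub ((X t ω)ᵀ r k) _ _),
          Finset.sum_sub_distrib, sub_eq_zero] at h1
        rw [← h1, h2]
      have hval : ∑ k, (Y t ω * (X t ω)ᵀ) i k * (Pm t * A) k j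
          = ((Y t ω * (X t ω)ᵀ) * (Pm t * A)) i j := (Matrix.mul_apply).symm
      rw [hval, Matrix.mul_assoc, Matrix.mul_apply]
      rw [Matrix.mul_apply]
      refine Finset.sum_congr rfl fun r _ => ?_
      rw [show ((X t ω)ᵀ * (Pm t * A)) r j = ∑ k, (X t ω)ᵀ r k * (Pm t * A) k j
        from Matrix.mul_apply, hcol r]
    calc (mExp (fun ω => Y t ω * (X t ω)ᵀ) * (Pm t * A)) i j
        = ∑ k, (∫ ω, (Y t ω * (X t ω)ᵀ) i k) * (Pm t * A) k j := by
          simp [Matrix.mul_apply, mExp]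
      _ = ∑ k, ∫ ω, (Y t ω * (X t ω)ᵀ) i k * (Pm t * A) k j :=
          Finset.sum_congr rfl fun k _ => (integral_mul_const _ _).symm
      _ = ∫ ω, ∑ k, (Y t ω * (X t ω)ᵀ) i k * (Pm t * A) k j :=
          (integral_finset_sum _ fun k _ => (hintYX t i k).mul_const _).symm
      _ = ∫ ω, (Y t ω * (X t ω)ᵀ) i j := integral_congr_ae key
      _ = mExp (fun ω => Y t ω * (X t ω)ᵀ) i j := rfl
  -- Final algebra
  rw [hstep, hWstar t, hWstar (t + 1)]
  rw [Matrix.sub_mul, Matrix.mul_sub, Matrix.mul_sub, Matrix.mul_one, Matrix.mul_one,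
    Matrix.mul_smul, Matrix.mul_smul, hSA, smul_sub]
  abel
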